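/- arXiv:1510.00235 — 3 statements merged into one kernel-verified Lean document; each statement's English description precedes it below -/
import Mathlib

section
/- Let G be a compact Lie group, V a finite-dimensional real orthogonal representation of G, Ω an open G-invariant subset of V, and (H) a maximal orbit type in Iso(Ω). Then for every f ∈ F^∇_G(Ω) the restriction f_H = f|_{D_f ∩ Ω_H} is a WH-equivariant gradient local map on Ω_H (in particular its zero set is compact and it is the gradient of a WH-invariant C¹ potential on its domain), and if f, g ∈ F^∇_G(Ω) are gradient otopic then f_H and g_H are gradient otopic in F^∇_{WH}(Ω_H). Hence restriction induces a well-defined map F^∇_G[Ω] → F^∇_{WH}[Ω_H]. -/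
open scoped Manifold Classical

set_option linter.unusedSectionVars false

noncomputable section

section Defs

variable {Γ : Type*} [Group Γ] {W : Type*} [NormedAddCommGroup W]
  [InnerProductSpace ℝ W] [CompleteSpace W]

/-- The stabilizer subgroup of a point under the action `ρ`. -/
def stab (ρ : Γ →* (W ≃ₗᵢ[ℝ] W)) (x : W) : Subgroup Γ where
  carrier := {g | ρ g x = x}
  one_mem' := by simp
  mul_mem' := by
    intro a b ha hb
    simp only [Set.mem_setOf_eq] at *
    rw [map_mul]
    show ρ a (ρ b x) = x
    rw [hb, ha]
  inv_mem' := by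
    intro a ha
    simp only [Set.mem_setOf_eq] at *
    have h1 : ρ a (ρ a⁻¹ x) = ρ a x := by
      rw [ha]
      show (ρ a * ρ a⁻¹) x = x
      rw [← map_mul]
      simp
    exact (ρ a).injective h1

/-- The conjugate subgroup `gHg⁻¹`. -/
def conjSub (g : Γ) (H : Subgroup Γ) : Subgroup Γ :=
  H.map ((MulAut.conj g).toMonoidHom)

/-- An equivariant local map on `Ω`: a continuous equivariant map defined on an open
invariant subset of `Ω` whose zero set is compact. -/
structure EqLocalMap (ρ : Γ →* (W ≃ₗᵢ[ℝ] W)) (Ω : Set W) where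
  dom : Set W
  toFun : W → W
  dom_sub : dom ⊆ Ω
  dom_open : IsOpen dom
  dom_inv : ∀ (g : Γ) (x : W), x ∈ dom → ρ g x ∈ dom
  cont : ContinuousOn toFun dom
  equivariant : ∀ (g : Γ) (x : W), x ∈ dom → toFun (ρ g x) = ρ g (toFun x)
  zeros_compact : IsCompact {x ∈ dom | toFun x = 0}

/-- A local map is gradient if it is the gradient of an invariant `C¹` potential
(the potential has a gradient at every point of the domain, and the gradient, being
the map itself, is continuous). -/
def IsGradMap {ρ : Γ →* (W ≃ₗᵢ[ℝ] W)} {Ω : Set W} (f : EqLocalMap ρ Ω) : Prop :=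
  ∃ φ : W → ℝ, (∀ (g : Γ) (x : W), x ∈ f.dom → φ (ρ g x) = φ x) ∧
    ∀ x ∈ f.dom, HasGradientAt φ (f.toFun x) x

/-- An equivariant gradient local map on `Ω`; `F^∇_G(Ω)`. -/
structure GradLocalMap (ρ : Γ →* (W ≃ₗᵢ[ℝ] W)) (Ω : Set W) extends EqLocalMap ρ Ω where
  isGrad : IsGradMap toEqLocalMap

/-- An otopy on `Ω`: an equivariant local map on `[0,1] × Ω` (`[0,1]` carrying the
trivial action), with domain open in `[0,1] × V` and compact zero set. -/
structure Otopy (ρ : Γ →* (W ≃ₗᵢ[ℝ] W)) (Ω : Set W) where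
  dom : Set (ℝ × W)
  toFun : ℝ × W → W
  dom_relOpen : ∃ U : Set (ℝ × W), IsOpen U ∧ dom = U ∩ (Set.Icc (0:ℝ) 1) ×ˢ Ω
  dom_inv : ∀ (g : Γ) (t : ℝ) (x : W), (t, x) ∈ dom → (t, ρ g x) ∈ dom
  cont : ContinuousOn toFun dom
  equivariant : ∀ (g : Γ) (t : ℝ) (x : W), (t, x) ∈ dom →
    toFun (t, ρ g x) = ρ g (toFun (t, x))
  zeros_compact : IsCompact {p ∈ dom | toFun p = 0}

/-- An otopy is gradient if every slice `h_t` is a gradient map. -/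
def Otopy.IsGrad {ρ : Γ →* (W ≃ₗᵢ[ℝ] W)} {Ω : Set W} (h : Otopy ρ Ω) : Prop :=
  ∀ t : ℝ, ∃ φ : W → ℝ,
    (∀ (g : Γ) (x : W), (t, x) ∈ h.dom → φ (ρ g x) = φ x) ∧
    ∀ x : W, (t, x) ∈ h.dom → HasGradientAt φ (h.toFun (t, x)) x

/-- Two equivariant local maps are otopic if some otopy joins them. -/
def Otopic {ρ : Γ →* (W ≃ₗᵢ[ℝ] W)} {Ω : Set W} (f g : EqLocalMap ρ Ω) : Prop :=
  ∃ h : Otopy ρ Ω,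
    {x : W | (0, x) ∈ h.dom} = f.dom ∧ {x : W | (1, x) ∈ h.dom} = g.dom ∧
    (∀ x ∈ f.dom, h.toFun (0, x) = f.toFun x) ∧
    (∀ x ∈ g.dom, h.toFun (1, x) = g.toFun x)

/-- Two equivariant gradient local maps are gradient otopic if some gradient otopy
joins them. -/
def GradOtopic {ρ : Γ →* (W ≃ₗᵢ[ℝ] W)} {Ω : Set W} (f g : GradLocalMap ρ Ω) : Prop :=
  ∃ h : Otopy ρ Ω, h.IsGrad ∧
    {x : W | (0, x) ∈ h.dom} = f.dom ∧ {x : W | (1, x) ∈ h.dom} = g.dom ∧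
    (∀ x ∈ f.dom, h.toFun (0, x) = f.toFun x) ∧
    (∀ x ∈ g.dom, h.toFun (1, x) = g.toFun x)

/-- The set of gradient otopy classes `F^∇_G[Ω]`. -/
def GradClasses (ρ : Γ →* (W ≃ₗᵢ[ℝ] W)) (Ω : Set W) : Type _ :=
  Quot (GradOtopic (ρ := ρ) (Ω := Ω))

/-- `Ω_H`: points of `Ω` with stabilizer exactly `H`. -/
def omegaH (ρ : Γ →* (W ≃ₗᵢ[ℝ] W)) (Ω : Set W) (H : Subgroup Γ) : Set W :=
  {x ∈ Ω | stab ρ x = H}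

/-- `Ω_(H)`: points of `Ω` with stabilizer conjugate to `H`. -/
def omegaConj (ρ : Γ →* (W ≃ₗᵢ[ℝ] W)) (Ω : Set W) (H : Subgroup Γ) : Set W :=
  {x ∈ Ω | ∃ g : Γ, conjSub g H = stab ρ x}

/-- The orbit space `S/N` of a subset `S` under the action of a subgroup `N`,
with the quotient topology. -/
def orbitSpace (ρ : Γ →* (W ≃ₗᵢ[ℝ] W)) (S : Set W) (N : Subgroup Γ) : Type _ :=
  Quot fun x y : S => ∃ n ∈ N, ρ n (x : W) = (y : W)

instance (ρ : Γ →* (W ≃ₗᵢ[ℝ] W)) (S : Set W) (N : Subgroup Γ) :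
    TopologicalSpace (orbitSpace ρ S N) :=
  instTopologicalSpaceQuot

/-- `(H)` is a maximal orbit type in `Iso(Ω)`: every orbit type occurring in `Ω`
which is `≥ (H)` equals `(H)`. -/
def IsMaximalOrbit (ρ : Γ →* (W ≃ₗᵢ[ℝ] W)) (Ω : Set W) (H : Subgroup Γ) : Prop :=
  ∀ x ∈ Ω, (∃ g : Γ, conjSub g H ≤ stab ρ x) → ∃ g : Γ, conjSub g H = stab ρ x

/-- The fixed-point subspace `V^H`, as a submodule. -/
def fixedSubmodule (ρ : Γ →* (W ≃ₗᵢ[ℝ] W)) (H : Subgroup Γ) : Submodule ℝ W where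
  carrier := {x | ∀ h ∈ H, ρ h x = x}
  add_mem' := by
    intro a b ha hb h hh
    rw [map_add, ha h hh, hb h hh]
  zero_mem' := by intro h hh; simp
  smul_mem' := by
    intro c a ha h hh
    rw [map_smul, ha h hh]

theorem fix_apply_mem (ρ : Γ →* (W ≃ₗᵢ[ℝ] W)) (H : Subgroup Γ) {n : Γ}
    (hn : n ∈ (Subgroup.normalizer (H : Set Γ))) {x : W} (hx : x ∈ fixedSubmodule ρ H) :
    ρ n x ∈ fixedSubmodule ρ H := by
  intro h hh
  have h1 : n⁻¹ * h * n ∈ H := by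
    have := (Subgroup.mem_normalizer_iff.mp hn (n⁻¹ * h * n)).mpr
    apply this
    have e : n * (n⁻¹ * h * n) * n⁻¹ = h := by group
    rw [e]
    exact hh
  have e1 : h * n = n * (n⁻¹ * h * n) := by group
  calc ρ h (ρ n x) = (ρ h * ρ n) x := rfl
    _ = ρ (h * n) x := by rw [map_mul]
    _ = ρ (n * (n⁻¹ * h * n)) x := by rw [← e1]
    _ = (ρ n * ρ (n⁻¹ * h * n)) x := by rw [map_mul]
    _ = ρ n (ρ (n⁻¹ * h * n) x) := rfl
    _ = ρ n x := by rw [hx _ h1]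

/-- The restriction of `ρ n`, for `n` in the normalizer of `H`, to a linear isometric
equivalence of `V^H`. -/
def restrictEquiv (ρ : Γ →* (W ≃ₗᵢ[ℝ] W)) (H : Subgroup Γ) (n : (Subgroup.normalizer (H : Set Γ))) :
    (fixedSubmodule ρ H) ≃ₗᵢ[ℝ] (fixedSubmodule ρ H) where
  toFun x := ⟨ρ (n : Γ) x, fix_apply_mem ρ H n.2 x.2⟩
  invFun x := ⟨ρ ((n : Γ)⁻¹) x, fix_apply_mem ρ H ((Subgroup.normalizer (H : Set Γ)).inv_mem n.2) x.2⟩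
  map_add' := by intro a b; ext; simp
  map_smul' := by intro c a; ext; simp
  left_inv := by
    intro a; ext
    calc (ρ ((n : Γ)⁻¹)) ((ρ (n : Γ)) (a : W)) = (ρ ((n : Γ)⁻¹) * ρ (n : Γ)) (a : W) := rfl
      _ = ρ ((n : Γ)⁻¹ * (n : Γ)) (a : W) := by rw [map_mul]
      _ = (a : W) := by simp
  right_inv := by intro a; ext; simp
  norm_map' := by intro a; simp

/-- The action of the normalizer `NH` on `V^H`.  Since `H` acts trivially on `V^H`,
this is precisely the action of the Weyl group `WH = NH/H` on `V^H`; equivariance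
(resp. invariance) with respect to it is equivalent to `WH`-equivariance
(resp. `WH`-invariance). -/
def restrictAction (ρ : Γ →* (W ≃ₗᵢ[ℝ] W)) (H : Subgroup Γ) :
    (Subgroup.normalizer (H : Set Γ)) →* ((fixedSubmodule ρ H) ≃ₗᵢ[ℝ] (fixedSubmodule ρ H)) where
  toFun := restrictEquiv ρ H
  map_one' := by
    refine LinearIsometryEquiv.ext fun x => Subtype.ext ?_
    show ρ ((1 : (Subgroup.normalizer (H : Set Γ))) : Γ) (x : W) = _
    simp [LinearIsometryEquiv.coe_one]
  map_mul' := by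
    intro a b
    refine LinearIsometryEquiv.ext fun x => Subtype.ext ?_
    show ρ ((a * b : (Subgroup.normalizer (H : Set Γ))) : Γ) (x : W) = _
    push_cast
    rw [map_mul]
    rfl

variable [FiniteDimensional ℝ W]

/-- `Ω_H` viewed as a subset of `V^H`. -/
def omegaHSub (ρ : Γ →* (W ≃ₗᵢ[ℝ] W)) (Ω : Set W) (H : Subgroup Γ) :
    Set (fixedSubmodule ρ H) :=
  Subtype.val ⁻¹' (omegaH ρ Ω H)

/-- `k` is the restriction `f|_{D_f ∩ Ω_H}` of `f`, viewed as a `WH`-equivariant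
gradient local map on `Ω_H ⊆ V^H`. -/
def RestrictsTo {ρ : Γ →* (W ≃ₗᵢ[ℝ] W)} {Ω : Set W} (H : Subgroup Γ)
    (f : GradLocalMap ρ Ω)
    (k : GradLocalMap (restrictAction ρ H) (omegaHSub ρ Ω H)) : Prop :=
  k.dom = Subtype.val ⁻¹' (f.dom ∩ omegaH ρ Ω H) ∧
  ∀ x : fixedSubmodule ρ H, x ∈ k.dom → (k.toFun x : W) = f.toFun (x : W)

end Defs


open Filter Topology

lemma inv_mem_closure_pow {G : Type*} [Group G] [TopologicalSpace G] [CompactSpace G]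
    [IsTopologicalGroup G] (a : G) :
    a⁻¹ ∈ closure (Set.range fun k : ℕ => a ^ (k + 1)) := by
  obtain ⟨x, hx⟩ := exists_clusterPt_of_compactSpace (Filter.map (fun k : ℕ => a ^ (k + 1)) atTop)
  have hx' : MapClusterPt x atTop (fun k : ℕ => a ^ (k + 1)) := hx
  rw [mem_closure_iff]
  intro U hU haU
  have hc : ContinuousAt (fun p : G × G => p.1⁻¹ * p.2 * a⁻¹) (x, x) := by fun_prop
  have hmem : (fun p : G × G => p.1⁻¹ * p.2 * a⁻¹) ⁻¹' U ∈ 𝓝 (x, x) := by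
    apply hc.preimage_mem_nhds
    rw [show x⁻¹ * x * a⁻¹ = a⁻¹ by group]
    exact hU.mem_nhds haU
  rw [mem_nhds_prod_iff] at hmem
  obtain ⟨W₁, hW₁, W₂, hW₂, hsub⟩ := hmem
  have hfreq : ∃ᶠ k in atTop, a ^ (k + 1) ∈ W₁ ∩ W₂ :=
    mapClusterPt_iff_frequently.mp hx' _ (Filter.inter_mem hW₁ hW₂)
  obtain ⟨m, -, hm⟩ := (frequently_atTop.mp hfreq) 0
  obtain ⟨k, hk, hk2⟩ := (frequently_atTop.mp hfreq) (m + 2)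
  obtain ⟨j, rfl⟩ := Nat.exists_eq_add_of_le hk
  refine ⟨a ^ (j + 1), ?_, ⟨j, rfl⟩⟩
  have : a ^ (j + 1) = (a ^ (m + 1))⁻¹ * a ^ (m + 2 + j + 1) * a⁻¹ := by
    rw [show m + 2 + j + 1 = (m+1) + (j+1) + 1 by ring, pow_add, pow_add]
    group
  rw [this]
  exact hsub (Set.mk_mem_prod hm.1 hk2.2)

lemma mem_conjSub {G : Type*} [Group G] {H : Subgroup G} {g y : G} :
    y ∈ conjSub g H ↔ ∃ h ∈ H, g * h * g⁻¹ = y := by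
  simp [conjSub, Subgroup.mem_map]

lemma conjSub_eq_of_le {G : Type*} [Group G] [TopologicalSpace G] [CompactSpace G]
    [IsTopologicalGroup G] (H : Subgroup G) (hcl : IsClosed ((H : Set G))) (g : G)
    (hle : H ≤ conjSub g H) : conjSub g H = H := by
  set a := g⁻¹ with ha
  have hstep : ∀ h ∈ H, a * h * a⁻¹ ∈ H := by
    intro h hh
    obtain ⟨h', hh', he⟩ := mem_conjSub.mp (hle hh)
    have : a * h * a⁻¹ = h' := by
      rw [← he, ha]; group
    rw [this]; exact hh'
  have hpow : ∀ (k : ℕ) (h : G), h ∈ H → a ^ k * h * (a ^ k)⁻¹ ∈ H := by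
    intro k
    induction k with
    | zero => intro h hh; simpa using hh
    | succ k ih =>
      intro h hh
      have := hstep _ (ih h hh)
      have e : a * (a ^ k * h * (a ^ k)⁻¹) * a⁻¹ = a ^ (k+1) * h * (a ^ (k+1))⁻¹ := by
        rw [pow_succ]; group
      rwa [e] at this
  -- now show conjSub g H ≤ H
  have hback : ∀ h ∈ H, a⁻¹ * h * a ∈ H := by
    intro h hh
    have hcont : Continuous fun x : G => x * h * x⁻¹ := by fun_prop
    have himg : ∀ y ∈ Set.range fun k : ℕ => a ^ (k + 1),
        (fun x : G => x * h * x⁻¹) y ∈ (H : Set G) := by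
      rintro y ⟨k, rfl⟩
      exact hpow (k+1) h hh
    have := map_mem_closure hcont (inv_mem_closure_pow a) himg
    rwa [hcl.closure_eq, show a⁻¹ * h * (a⁻¹)⁻¹ = a⁻¹ * h * a by group] at this
  refine le_antisymm ?_ hle
  intro y hy
  obtain ⟨h, hh, rfl⟩ := mem_conjSub.mp hy
  have := hback h hh
  rwa [ha, show g⁻¹⁻¹ * h * g⁻¹ = g * h * g⁻¹ by group] at this

open Filter Topology

section MyHelpers

lemma my_conjSub_one {G : Type*} [Group G] (H : Subgroup G) : conjSub 1 H = H := by
  ext x; simp [conjSub, Subgroup.mem_map]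

variable {G : Type*} [Group G] [TopologicalSpace G] [CompactSpace G]
variable {V : Type*} [NormedAddCommGroup V] [InnerProductSpace ℝ V] [FiniteDimensional ℝ V]

lemma my_stab_eq [IsTopologicalGroup G] {ρ : G →* (V ≃ₗᵢ[ℝ] V)} {Ω : Set V} {H : Subgroup G}
    (hcl : IsClosed ((H : Set G))) (hmax : IsMaximalOrbit ρ Ω H) {x : V}
    (hx : x ∈ Ω) (hfix : ∀ h ∈ H, ρ h x = x) : stab ρ x = H := by
  have hle : H ≤ stab ρ x := fun h hh => hfix h hh
  obtain ⟨g, hg⟩ := hmax x hx ⟨1, by rwa [my_conjSub_one]⟩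
  rw [← hg]
  exact conjSub_eq_of_le H hcl g (hg ▸ hle)

lemma my_key [IsTopologicalGroup G] {ρ : G →* (V ≃ₗᵢ[ℝ] V)} {Ω : Set V} {H : Subgroup G}
    (hcl : IsClosed ((H : Set G))) (hmax : IsMaximalOrbit ρ Ω H)
    (x : fixedSubmodule ρ H) (hx : (x : V) ∈ Ω) : (x : V) ∈ omegaH ρ Ω H :=
  ⟨hx, my_stab_eq hcl hmax hx x.2⟩

lemma my_hasGradientAt_subtype (K : Submodule ℝ V) (φ : V → ℝ) {v : V} (hv : v ∈ K) (x : K)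
    (h : HasGradientAt φ v (x : V)) :
    HasGradientAt (fun y : K => φ (y : V)) (⟨v, hv⟩ : K) x := by
  rw [hasGradientAt_iff_hasFDerivAt] at h ⊢
  have h2 := h.comp x K.subtypeL.hasFDerivAt
  exact h2.congr_fderiv (by ext y; simp [InnerProductSpace.toDual_apply_apply])

variable {ρ : G →* (V ≃ₗᵢ[ℝ] V)} {Ω : Set V} {H : Subgroup G}

lemma my_restrictAction_coe (n : (Subgroup.normalizer (H : Set G))) (x : fixedSubmodule ρ H) :
    ((restrictAction ρ H n x : fixedSubmodule ρ H) : V) = ρ (n : G) (x : V) := rfl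

lemma my_exists_restrict
    (hkey : ∀ x : fixedSubmodule ρ H, (x : V) ∈ Ω → (x : V) ∈ omegaH ρ Ω H)
    (f : GradLocalMap ρ Ω) :
    ∃ k : GradLocalMap (restrictAction ρ H) (omegaHSub ρ Ω H), RestrictsTo H f k := by
  set K := fixedSubmodule ρ H with hKdef
  have hval : ∀ x : K, (x : V) ∈ f.dom → f.toFun (x : V) ∈ K := by
    intro x hx h hh
    rw [← f.equivariant h (x : V) hx, x.2 h hh]
  have domEq : (Subtype.val ⁻¹' (f.dom ∩ omegaH ρ Ω H) : Set K) = Subtype.val ⁻¹' f.dom := by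
    ext x
    exact ⟨fun h => h.1, fun h => ⟨h, hkey x (f.dom_sub h)⟩⟩
  have hproj : ∀ (x : K) (hx : (x : V) ∈ f.dom),
      K.orthogonalProjection (f.toFun (x : V)) = ⟨f.toFun (x : V), hval x hx⟩ := by
    intro x hx
    exact Subtype.ext (K.starProjection_eq_self_iff.mpr (hval x hx))
  have hdominv : ∀ (n : (Subgroup.normalizer (H : Set G))) (x : K),
      x ∈ (Subtype.val ⁻¹' (f.dom ∩ omegaH ρ Ω H) : Set K) →
      restrictAction ρ H n x ∈ (Subtype.val ⁻¹' (f.dom ∩ omegaH ρ Ω H) : Set K) := by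
    intro n x hx
    have h1 : ρ (n : G) (x : V) ∈ f.dom := f.dom_inv (n : G) (x : V) hx.1
    exact ⟨h1, hkey _ (f.dom_sub h1)⟩
  refine ⟨{ dom := Subtype.val ⁻¹' (f.dom ∩ omegaH ρ Ω H),
            toFun := fun x => K.orthogonalProjection (f.toFun (x : V)),
            dom_sub := fun x hx => hx.2,
            dom_open := by rw [domEq]; exact f.dom_open.preimage continuous_subtype_val,
            dom_inv := hdominv,
            cont := ?_, equivariant := ?_, zeros_compact := ?_, isGrad := ?_ }, rfl, ?_⟩
  · exact (K.orthogonalProjection).continuous.comp_continuousOn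
      (f.cont.comp continuous_subtype_val.continuousOn (fun x hx => hx.1))
  · intro n x hx
    have hx2 := hdominv n x hx
    apply Subtype.ext
    show ((K.orthogonalProjection (f.toFun ((restrictAction ρ H n x : fixedSubmodule ρ H) : V)) : K) : V)
        = ((restrictAction ρ H n (K.orthogonalProjection (f.toFun (x : V))) : K) : V)
    rw [hproj _ hx2.1, hproj _ hx.1]
    show f.toFun (ρ (n : G) (x : V)) = ρ (n : G) (f.toFun (x : V))
    exact f.equivariant (n : G) (x : V) hx.1
  · have hset : {x : K | x ∈ (Subtype.val ⁻¹' (f.dom ∩ omegaH ρ Ω H) : Set K) ∧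
        K.orthogonalProjection (f.toFun (x : V)) = 0}
        = Subtype.val ⁻¹' ({y ∈ f.dom | f.toFun y = 0} ∩ (K : Set V)) := by
      ext x
      simp only [Set.mem_setOf_eq, Set.mem_preimage, Set.mem_inter_iff, SetLike.mem_coe]
      constructor
      · rintro ⟨h1, h2⟩
        refine ⟨⟨h1.1, ?_⟩, x.2⟩
        have := congrArg (Subtype.val) ((hproj x h1.1).symm.trans h2)
        simpa using this
      · rintro ⟨⟨h1, h2⟩, -⟩
        refine ⟨⟨h1, hkey x (f.dom_sub h1)⟩, ?_⟩
        rw [hproj x h1]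
        exact Subtype.ext (by simpa using h2)
    show IsCompact {x : K | x ∈ (Subtype.val ⁻¹' (f.dom ∩ omegaH ρ Ω H) : Set K) ∧
        K.orthogonalProjection (f.toFun (x : V)) = 0}
    rw [hset]
    apply IsInducing.subtypeVal.isCompact_preimage'
    · exact f.zeros_compact.inter_right K.closed_of_finiteDimensional
    · intro p hp
      exact ⟨⟨p, hp.2⟩, rfl⟩
  · obtain ⟨φ, hinv, hgrad⟩ := f.isGrad
    refine ⟨fun y : K => φ (y : V), ?_, ?_⟩
    · intro n x hx
      exact hinv (n : G) (x : V) hx.1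
    · intro x hx
      show HasGradientAt (fun y : K => φ (y : V)) (K.orthogonalProjection (f.toFun (x : V))) x
      rw [hproj x hx.1]
      exact my_hasGradientAt_subtype K φ (hval x hx.1) x (hgrad (x : V) hx.1)
  · intro x hx
    show ((K.orthogonalProjection (f.toFun (x : V)) : K) : V) = f.toFun (x : V)
    rw [hproj x hx.1]

end MyHelpers

section MyHelpers2

variable {G : Type*} [Group G] [TopologicalSpace G] [CompactSpace G]
variable {V : Type*} [NormedAddCommGroup V] [InnerProductSpace ℝ V] [FiniteDimensional ℝ V]
variable {ρ : G →* (V ≃ₗᵢ[ℝ] V)} {Ω : Set V} {H : Subgroup G}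

lemma my_otopic_restrict
    (hkey : ∀ x : fixedSubmodule ρ H, (x : V) ∈ Ω → (x : V) ∈ omegaH ρ Ω H)
    {f g : GradLocalMap ρ Ω}
    {kf kg : GradLocalMap (restrictAction ρ H) (omegaHSub ρ Ω H)}
    (hf : RestrictsTo H f kf) (hg : RestrictsTo H g kg) (hfg : GradOtopic f g) :
    GradOtopic kf kg := by
  set K := fixedSubmodule ρ H with hKdef
  obtain ⟨h, hgrad, hd0, hd1, he0, he1⟩ := hfg
  have hvalmem : ∀ (t : ℝ) (x : K), (t, (x : V)) ∈ h.dom → h.toFun (t, (x : V)) ∈ K := by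
    intro t x hx hh hhh
    rw [← h.equivariant hh t (x : V) hx, x.2 hh hhh]
  have hproj : ∀ (t : ℝ) (x : K) (hx : (t, (x : V)) ∈ h.dom),
      K.orthogonalProjection (h.toFun (t, (x : V))) = ⟨h.toFun (t, (x : V)), hvalmem t x hx⟩ :=
    fun t x hx => Subtype.ext (K.starProjection_eq_self_iff.mpr (hvalmem t x hx))
  have hind : Topology.IsInducing (fun p : ℝ × K => (p.1, (p.2 : V))) :=
    Topology.IsInducing.id.prodMap Topology.IsInducing.subtypeVal
  refine ⟨{ dom := (fun p : ℝ × K => (p.1, (p.2 : V))) ⁻¹' h.dom,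
            toFun := fun p => K.orthogonalProjection (h.toFun (p.1, (p.2 : V))),
            dom_relOpen := ?_, dom_inv := ?_, cont := ?_, equivariant := ?_,
            zeros_compact := ?_ }, ?_, ?_, ?_, ?_, ?_⟩
  · obtain ⟨U, hU, he⟩ := h.dom_relOpen
    refine ⟨(fun p : ℝ × K => (p.1, (p.2 : V))) ⁻¹' U,
      hU.preimage (by fun_prop), ?_⟩
    ext ⟨t, x⟩
    simp only [Set.mem_preimage, he, Set.mem_inter_iff, Set.mem_prod, omegaHSub]
    constructor
    · rintro ⟨h1, h2, h3⟩
      exact ⟨h1, h2, hkey x h3⟩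
    · rintro ⟨h1, h2, h3⟩
      exact ⟨h1, h2, h3.1⟩
  · intro n t x hx
    exact h.dom_inv (n : G) t (x : V) hx
  · exact (K.orthogonalProjection).continuous.comp_continuousOn
      (h.cont.comp ((by fun_prop : Continuous fun p : ℝ × K => (p.1, (p.2 : V))).continuousOn)
        (fun p hp => hp))
  · intro n t x hx
    have hx2 : (0, ((restrictAction ρ H n x : K) : V)) ∈ h.dom → True := fun _ => trivial
    have hx2' : (t, ((restrictAction ρ H n x : K) : V)) ∈ h.dom := h.dom_inv (n : G) t (x : V) hx
    apply Subtype.ext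
    show ((K.orthogonalProjection (h.toFun (t, ((restrictAction ρ H n x : K) : V))) : K) : V)
        = ((restrictAction ρ H n (K.orthogonalProjection (h.toFun (t, (x : V)))) : K) : V)
    rw [hproj t _ hx2', hproj t x hx]
    show h.toFun (t, ρ (n : G) (x : V)) = ρ (n : G) (h.toFun (t, (x : V)))
    exact h.equivariant (n : G) t (x : V) hx
  · have hset : {p : ℝ × K | p ∈ (fun p : ℝ × K => (p.1, (p.2 : V))) ⁻¹' h.dom ∧
        K.orthogonalProjection (h.toFun (p.1, (p.2 : V))) = 0}
        = (fun p : ℝ × K => (p.1, (p.2 : V))) ⁻¹'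
          ({q ∈ h.dom | h.toFun q = 0} ∩ (Set.univ ×ˢ (K : Set V))) := by
      ext ⟨t, x⟩
      simp only [Set.mem_setOf_eq, Set.mem_preimage, Set.mem_inter_iff, Set.mem_prod,
        Set.mem_univ, true_and, SetLike.mem_coe]
      constructor
      · rintro ⟨h1, h2⟩
        refine ⟨⟨h1, ?_⟩, x.2⟩
        have := congrArg Subtype.val ((hproj t x h1).symm.trans h2)
        simpa using this
      · rintro ⟨⟨h1, h2⟩, -⟩
        refine ⟨h1, ?_⟩
        rw [hproj t x h1]
        exact Subtype.ext (by simpa using h2)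
    show IsCompact {p : ℝ × K | p ∈ (fun p : ℝ × K => (p.1, (p.2 : V))) ⁻¹' h.dom ∧
        K.orthogonalProjection (h.toFun (p.1, (p.2 : V))) = 0}
    rw [hset]
    apply hind.isCompact_preimage'
    · exact h.zeros_compact.inter_right (isClosed_univ.prod K.closed_of_finiteDimensional)
    · rintro ⟨t, y⟩ hy
      exact ⟨(t, ⟨y, hy.2.2⟩), rfl⟩
  · intro t
    obtain ⟨φ, hinv, hgr⟩ := hgrad t
    refine ⟨fun y : K => φ (y : V), fun n x hx => hinv (n : G) (x : V) hx, ?_⟩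
    intro x hx
    show HasGradientAt (fun y : K => φ ((y : K) : V)) (K.orthogonalProjection (h.toFun (t, (x : V)))) x
    rw [hproj t x hx]
    exact my_hasGradientAt_subtype K φ (hvalmem t x hx) x (hgr (x : V) hx)
  · rw [hf.1]
    ext x
    show (0, (x : V)) ∈ h.dom ↔ _
    constructor
    · intro hx
      have hxf : (x : V) ∈ f.dom := by rw [← hd0]; exact hx
      exact ⟨hxf, hkey x (f.dom_sub hxf)⟩
    · intro hx
      have h1 := hx.1
      rw [← hd0] at h1
      exact h1
  · rw [hg.1]
    ext x
    show (1, (x : V)) ∈ h.dom ↔ _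
    constructor
    · intro hx
      have hxf : (x : V) ∈ g.dom := by rw [← hd1]; exact hx
      exact ⟨hxf, hkey x (g.dom_sub hxf)⟩
    · intro hx
      have h1 := hx.1
      rw [← hd1] at h1
      exact h1
  · intro x hx
    have hx' : (x : V) ∈ f.dom := (hf.1 ▸ hx).1
    have hxd : (0, (x : V)) ∈ h.dom := by have h2 := hx'; rw [← hd0] at h2; exact h2
    apply Subtype.ext
    show ((K.orthogonalProjection (h.toFun (0, (x : V))) : K) : V) = ((kf.toFun x : K) : V)
    rw [hproj 0 x hxd]
    show h.toFun (0, (x : V)) = _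
    rw [he0 (x : V) hx', hf.2 x hx]
  · intro x hx
    have hx' : (x : V) ∈ g.dom := (hg.1 ▸ hx).1
    have hxd : (1, (x : V)) ∈ h.dom := by have h2 := hx'; rw [← hd1] at h2; exact h2
    apply Subtype.ext
    show ((K.orthogonalProjection (h.toFun (1, (x : V))) : K) : V) = ((kg.toFun x : K) : V)
    rw [hproj 1 x hxd]
    show h.toFun (1, (x : V)) = _
    rw [he1 (x : V) hx', hg.2 x hx]

end MyHelpers2

/-- For a maximal orbit type `(H)`, the restriction `f_H = f|_(D_f ∩ Ω_H)` of any
`f ∈ F^∇_G(Ω)` is a `WH`-equivariant gradient local map on `Ω_H`, and gradient otopic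
maps have gradient otopic restrictions; hence restriction induces a well-defined map
`F^∇_G[Ω] → F^∇_(WH)[Ω_H]`. -/
theorem restriction_well_defined
    {n : ℕ} {G : Type*} [Group G] [TopologicalSpace G] [CompactSpace G]
    [ChartedSpace (EuclideanSpace ℝ (Fin n)) G] [LieGroup (𝓡 n) ((⊤ : ℕ∞) : WithTop ℕ∞) G]
    {V : Type*} [NormedAddCommGroup V] [InnerProductSpace ℝ V] [FiniteDimensional ℝ V]
    (ρ : G →* (V ≃ₗᵢ[ℝ] V)) (hρ : Continuous fun p : G × V => ρ p.1 p.2)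
    (Ω : Set V) (hΩo : IsOpen Ω) (hΩinv : ∀ (g : G) (x : V), x ∈ Ω → ρ g x ∈ Ω)
    (H : Subgroup G) (hcl : IsClosed ((H : Set G)))
    (hiso : (omegaH ρ Ω H).Nonempty) (hmax : IsMaximalOrbit ρ Ω H) :
    (∀ f : GradLocalMap ρ Ω,
      ∃ k : GradLocalMap (restrictAction ρ H) (omegaHSub ρ Ω H), RestrictsTo H f k) ∧
    (∀ (f g : GradLocalMap ρ Ω)
      (kf kg : GradLocalMap (restrictAction ρ H) (omegaHSub ρ Ω H)),
      RestrictsTo H f kf → RestrictsTo H g kg → GradOtopic f g → GradOtopic kf kg) := by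
  haveI : IsTopologicalGroup G := topologicalGroup_of_lieGroup (𝓡 n) ((⊤ : ℕ∞) : WithTop ℕ∞)
  have hkey : ∀ x : fixedSubmodule ρ H, (x : V) ∈ Ω → (x : V) ∈ omegaH ρ Ω H :=
    fun x hx => my_key hcl hmax x hx
  exact ⟨my_exists_restrict hkey,
    fun f g kf kg hf hg hfg => my_otopic_restrict hkey hf hg hfg⟩

end
end

section
/- Let G be a compact Lie group, V a finite-dimensional real orthogonal representation of G, and Ω an open G-invariant subset of V. Then the relation of gradient otopy is an equivalence relation on the set F^∇_G(Ω) of equivariant gradient local maps on Ω. -/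
open scoped Manifold Classical

set_option linter.unusedSectionVars false

noncomputable section

section EquivProof

variable {Γ : Type*} [Group Γ] {W : Type*} [NormedAddCommGroup W]
  [InnerProductSpace ℝ W] [CompleteSpace W]

lemma gradOtopic_refl {ρ : Γ →* (W ≃ₗᵢ[ℝ] W)} {Ω : Set W} (f : GradLocalMap ρ Ω) :
    GradOtopic f f := by
  refine ⟨⟨Set.Icc (0:ℝ) 1 ×ˢ f.dom, fun p => f.toFun p.2,
      ⟨Set.univ ×ˢ f.dom, isOpen_univ.prod f.dom_open, ?_⟩, ?_, ?_, ?_, ?_⟩,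
      ?_, ?_, ?_, ?_, ?_⟩
  · ext p
    simp only [Set.mem_prod, Set.mem_inter_iff, Set.mem_univ, true_and]
    exact ⟨fun h => ⟨h.2, h.1, f.dom_sub h.2⟩, fun h => ⟨h.2.1, h.1⟩⟩
  · intro g t x hx
    exact ⟨hx.1, f.dom_inv g x hx.2⟩
  · exact f.cont.comp continuous_snd.continuousOn (fun p hp => hp.2)
  · intro g t x hx
    exact f.equivariant g x hx.2
  · have he : {p ∈ Set.Icc (0:ℝ) 1 ×ˢ f.dom | f.toFun p.2 = 0} =
        Set.Icc (0:ℝ) 1 ×ˢ {x ∈ f.dom | f.toFun x = 0} := by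
      ext p
      simp only [Set.mem_setOf_eq, Set.mem_sep_iff, Set.mem_prod]
      tauto
    rw [he]
    exact isCompact_Icc.prod f.zeros_compact
  · intro t
    obtain ⟨φ, hinv, hgrad⟩ := f.isGrad
    exact ⟨φ, fun g x hx => hinv g x hx.2, fun x hx => hgrad x hx.2⟩
  · ext x
    simp only [Set.mem_setOf_eq, Set.mem_prod, Set.mem_Icc]
    norm_num
  · ext x
    simp only [Set.mem_setOf_eq, Set.mem_prod, Set.mem_Icc]
    norm_num
  · intro x hx; rfl
  · intro x hx; rfl

lemma gradOtopic_symm {ρ : Γ →* (W ≃ₗᵢ[ℝ] W)} {Ω : Set W} {f g : GradLocalMap ρ Ω}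
    (hfg : GradOtopic f g) : GradOtopic g f := by
  obtain ⟨h, hgr, h0, h1, e0, e1⟩ := hfg
  have σcont : Continuous fun p : ℝ × W => ((1:ℝ) - p.1, p.2) :=
    (continuous_const.sub continuous_fst).prodMk continuous_snd
  refine ⟨⟨(fun p : ℝ × W => ((1:ℝ) - p.1, p.2)) ⁻¹' h.dom,
      fun p => h.toFun (1 - p.1, p.2), ?_, ?_, ?_, ?_, ?_⟩, ?_, ?_, ?_, ?_, ?_⟩
  · obtain ⟨U, hUo, hUeq⟩ := h.dom_relOpen
    refine ⟨(fun p : ℝ × W => ((1:ℝ) - p.1, p.2)) ⁻¹' U, hUo.preimage σcont, ?_⟩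
    ext ⟨t, x⟩
    simp only [Set.mem_preimage, hUeq, Set.mem_inter_iff, Set.mem_prod, Set.mem_Icc]
    constructor
    · rintro ⟨hU, ⟨ha, hb⟩, hx⟩
      exact ⟨hU, ⟨by linarith, by linarith⟩, hx⟩
    · rintro ⟨hU, ⟨ha, hb⟩, hx⟩
      exact ⟨hU, ⟨by linarith, by linarith⟩, hx⟩
  · intro g t x hx
    exact h.dom_inv g (1 - t) x hx
  · exact h.cont.comp σcont.continuousOn (fun p hp => hp)
  · intro g t x hx
    exact h.equivariant g (1 - t) x hx
  · have he : {p ∈ (fun p : ℝ × W => ((1:ℝ) - p.1, p.2)) ⁻¹' h.dom |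
        h.toFun (1 - p.1, p.2) = 0} =
        (fun p : ℝ × W => ((1:ℝ) - p.1, p.2)) '' {p ∈ h.dom | h.toFun p = 0} := by
      ext ⟨t, x⟩
      constructor
      · rintro ⟨hd, hz⟩
        refine ⟨(1 - t, x), ⟨hd, hz⟩, ?_⟩
        show ((1:ℝ) - (1 - t), x) = (t, x)
        rw [show (1:ℝ) - (1 - t) = t by ring]
      · rintro ⟨⟨s, y⟩, ⟨hd, hz⟩, heq⟩
        obtain ⟨rfl, rfl⟩ : 1 - s = t ∧ y = x := by simpa [Prod.ext_iff] using heq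
        refine ⟨?_, ?_⟩
        · show ((1:ℝ) - (1 - s), y) ∈ h.dom
          rw [show (1:ℝ) - (1 - s) = s by ring]
          exact hd
        · show h.toFun ((1:ℝ) - (1 - s), y) = 0
          rw [show (1:ℝ) - (1 - s) = s by ring]
          exact hz
    rw [he]
    exact h.zeros_compact.image σcont
  · intro t
    obtain ⟨φ, hi, hg⟩ := hgr (1 - t)
    exact ⟨φ, fun g x hx => hi g x hx, fun x hx => hg x hx⟩
  · rw [← h1]
    ext x
    simp only [Set.mem_setOf_eq, Set.mem_preimage]
    norm_num
  · rw [← h0]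
    ext x
    simp only [Set.mem_setOf_eq, Set.mem_preimage]
    norm_num
  · intro x hx
    show h.toFun ((1:ℝ) - 0, x) = g.toFun x
    rw [show (1:ℝ) - 0 = 1 by norm_num]
    exact e1 x hx
  · intro x hx
    show h.toFun ((1:ℝ) - 1, x) = f.toFun x
    rw [show (1:ℝ) - 1 = 0 by norm_num]
    exact e0 x hx

lemma gradOtopic_trans {ρ : Γ →* (W ≃ₗᵢ[ℝ] W)} {Ω : Set W} {f g k : GradLocalMap ρ Ω}
    (hfg : GradOtopic f g) (hgk : GradOtopic g k) : GradOtopic f k := by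
  obtain ⟨h1, g1, a0, a1, v0, v1⟩ := hfg
  obtain ⟨h2, g2, b0, b1, w0, w1⟩ := hgk
  obtain ⟨U1, hU1o, hU1eq⟩ := h1.dom_relOpen
  obtain ⟨U2, hU2o, hU2eq⟩ := h2.dom_relOpen
  have αcont : Continuous fun p : ℝ × W => (2 * p.1, p.2) :=
    (continuous_const.mul continuous_fst).prodMk continuous_snd
  have βcont : Continuous fun p : ℝ × W => (2 * p.1 - 1, p.2) :=
    ((continuous_const.mul continuous_fst).sub continuous_const).prodMk continuous_snd
  set D : Set (ℝ × W) := {p : ℝ × W | (p.1 ≤ 1/2 ∧ (2 * p.1, p.2) ∈ h1.dom) ∨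
    (1/2 ≤ p.1 ∧ (2 * p.1 - 1, p.2) ∈ h2.dom)} with hD
  -- junction facts
  have jmem1 : ∀ x : W, ((0:ℝ), x) ∈ h2.dom → ((1:ℝ), x) ∈ h1.dom := by
    intro x hx
    have hxg : x ∈ g.dom := by rw [← b0]; exact hx
    rw [← a1] at hxg
    exact hxg
  have jmem2 : ∀ x : W, ((1:ℝ), x) ∈ h1.dom → ((0:ℝ), x) ∈ h2.dom := by
    intro x hx
    have hxg : x ∈ g.dom := by rw [← a1]; exact hx
    rw [← b0] at hxg
    exact hxg
  have jval : ∀ x : W, x ∈ g.dom → h1.toFun (1, x) = h2.toFun (0, x) := by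
    intro x hx
    rw [v1 x hx, w0 x hx]
  have hmem1 : ∀ p : ℝ × W, p ∈ D → p.1 ≤ 1/2 → (2 * p.1, p.2) ∈ h1.dom := by
    rintro ⟨t, x⟩ hp ht
    rcases hp with ⟨_, hm⟩ | ⟨ht', hm⟩
    · exact hm
    · have hteq : t = 1/2 := le_antisymm ht ht'
      subst hteq
      rw [show 2 * (1/2 : ℝ) - 1 = 0 by norm_num] at hm
      rw [show 2 * (1/2 : ℝ) = 1 by norm_num]
      exact jmem1 x hm
  have hmem2 : ∀ p : ℝ × W, p ∈ D → 1/2 ≤ p.1 → (2 * p.1 - 1, p.2) ∈ h2.dom := by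
    rintro ⟨t, x⟩ hp ht
    rcases hp with ⟨ht', hm⟩ | ⟨_, hm⟩
    · have hteq : t = 1/2 := le_antisymm ht' ht
      subst hteq
      rw [show 2 * (1/2 : ℝ) = 1 by norm_num] at hm
      rw [show 2 * (1/2 : ℝ) - 1 = 0 by norm_num]
      exact jmem2 x hm
    · exact hm
  have hd1sub : ∀ q : ℝ × W, q ∈ h1.dom → q ∈ U1 ∧ q.1 ∈ Set.Icc (0:ℝ) 1 ∧ q.2 ∈ Ω := by
    intro q hq
    rw [hU1eq] at hq
    exact ⟨hq.1, hq.2.1, hq.2.2⟩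
  have hd2sub : ∀ q : ℝ × W, q ∈ h2.dom → q ∈ U2 ∧ q.1 ∈ Set.Icc (0:ℝ) 1 ∧ q.2 ∈ Ω := by
    intro q hq
    rw [hU2eq] at hq
    exact ⟨hq.1, hq.2.1, hq.2.2⟩
  have hd1mem : ∀ q : ℝ × W, q ∈ U1 → q.1 ∈ Set.Icc (0:ℝ) 1 → q.2 ∈ Ω → q ∈ h1.dom := by
    intro q hu hi ho
    rw [hU1eq]
    exact ⟨hu, hi, ho⟩
  have hd2mem : ∀ q : ℝ × W, q ∈ U2 → q.1 ∈ Set.Icc (0:ℝ) 1 → q.2 ∈ Ω → q ∈ h2.dom := by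
    intro q hu hi ho
    rw [hU2eq]
    exact ⟨hu, hi, ho⟩
  refine ⟨⟨D, fun p => if p.1 ≤ 1/2 then h1.toFun (2 * p.1, p.2)
      else h2.toFun (2 * p.1 - 1, p.2), ?_, ?_, ?_, ?_, ?_⟩, ?_, ?_, ?_, ?_, ?_⟩
  · -- dom_relOpen
    refine ⟨((fun p : ℝ × W => (2 * p.1, p.2)) ⁻¹' U1 ∩ {p : ℝ × W | p.1 < 1/2}) ∪
        ({p : ℝ × W | 1/2 < p.1} ∩ (fun p : ℝ × W => (2 * p.1 - 1, p.2)) ⁻¹' U2) ∪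
        ((fun p : ℝ × W => (2 * p.1, p.2)) ⁻¹' U1 ∩
          (fun p : ℝ × W => (2 * p.1 - 1, p.2)) ⁻¹' U2), ?_, ?_⟩
    · refine IsOpen.union (IsOpen.union ?_ ?_) ?_
      · exact (hU1o.preimage αcont).inter (isOpen_lt continuous_fst continuous_const)
      · exact (isOpen_lt continuous_const continuous_fst).inter (hU2o.preimage βcont)
      · exact (hU1o.preimage αcont).inter (hU2o.preimage βcont)
    · ext ⟨t, x⟩
      simp only [hD, Set.mem_setOf_eq, Set.mem_inter_iff, Set.mem_union,
        Set.mem_preimage, Set.mem_prod, Set.mem_Icc]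
      constructor
      · rintro (⟨ht, hm⟩ | ⟨ht, hm⟩)
        · obtain ⟨hu, hi, ho⟩ := hd1sub _ hm
          simp only [Set.mem_Icc] at hi
          refine ⟨?_, ⟨by linarith, by linarith⟩, ho⟩
          rcases lt_or_eq_of_le ht with hlt | hteq
          · exact Or.inl (Or.inl ⟨hu, hlt⟩)
          · subst hteq
            refine Or.inr ⟨hu, ?_⟩
            have h2m : (2 * (1/2 : ℝ) - 1, x) ∈ h2.dom := hmem2 (1/2, x) (Or.inl ⟨le_refl _, hm⟩) (le_refl _)
            exact (hd2sub _ h2m).1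
        · obtain ⟨hu, hi, ho⟩ := hd2sub _ hm
          simp only [Set.mem_Icc] at hi
          refine ⟨?_, ⟨by linarith, by linarith⟩, ho⟩
          rcases lt_or_eq_of_le ht with hlt | hteq
          · exact Or.inl (Or.inr ⟨hlt, hu⟩)
          · have hteq' : t = 1/2 := hteq.symm
            subst hteq'
            refine Or.inr ⟨?_, hu⟩
            have h1m : (2 * (1/2 : ℝ), x) ∈ h1.dom := hmem1 (1/2, x) (Or.inr ⟨le_refl _, hm⟩) (le_refl _)
            exact (hd1sub _ h1m).1
      · rintro ⟨(⟨hu, hlt⟩ | ⟨hgt, hu⟩) | ⟨hu1, hu2⟩, ⟨h0t, ht1⟩, ho⟩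
        · exact Or.inl ⟨le_of_lt hlt, hd1mem _ hu (Set.mem_Icc.mpr
            ⟨by show (0:ℝ) ≤ 2 * t; linarith, by show (2:ℝ) * t ≤ 1; linarith⟩) ho⟩
        · exact Or.inr ⟨le_of_lt hgt, hd2mem _ hu (Set.mem_Icc.mpr
            ⟨by show (0:ℝ) ≤ 2 * t - 1; linarith, by show (2:ℝ) * t - 1 ≤ 1; linarith⟩) ho⟩
        · by_cases hle : t ≤ 1/2
          · exact Or.inl ⟨hle, hd1mem _ hu1 (Set.mem_Icc.mpr
              ⟨by show (0:ℝ) ≤ 2 * t; linarith, by show (2:ℝ) * t ≤ 1; linarith⟩) ho⟩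
          · exact Or.inr ⟨le_of_not_ge hle, hd2mem _ hu2 (Set.mem_Icc.mpr
              ⟨by show (0:ℝ) ≤ 2 * t - 1; linarith, by show (2:ℝ) * t - 1 ≤ 1; linarith⟩) ho⟩
  · -- dom_inv
    rintro g' t x (⟨ht, hm⟩ | ⟨ht, hm⟩)
    · exact Or.inl ⟨ht, h1.dom_inv g' (2 * t) x hm⟩
    · exact Or.inr ⟨ht, h2.dom_inv g' (2 * t - 1) x hm⟩
  · -- continuity
    intro p hp
    rcases lt_trichotomy p.1 (1/2 : ℝ) with hlt | heq | hgt
    · have hnb : {q : ℝ × W | q.1 < 1/2} ∈ nhds p :=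
        (isOpen_lt continuous_fst continuous_const).mem_nhds hlt
      rw [← continuousWithinAt_inter hnb]
      have hsub : Set.MapsTo (fun q : ℝ × W => (2 * q.1, q.2))
          (D ∩ {q : ℝ × W | q.1 < 1/2}) h1.dom := by
        rintro q ⟨hq, hq2⟩
        exact hmem1 q hq (le_of_lt hq2)
      have hc : ContinuousWithinAt (h1.toFun ∘ fun q : ℝ × W => (2 * q.1, q.2))
          (D ∩ {q : ℝ × W | q.1 < 1/2}) p :=
        (h1.cont.comp αcont.continuousOn hsub) p ⟨hp, hlt⟩
      exact hc.congr (fun q hq => if_pos (le_of_lt hq.2)) (if_pos (le_of_lt hlt))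
    · -- junction point
      have cw1 : ContinuousWithinAt
          (fun p : ℝ × W => if p.1 ≤ 1/2 then h1.toFun (2 * p.1, p.2)
            else h2.toFun (2 * p.1 - 1, p.2)) (D ∩ {q : ℝ × W | q.1 ≤ 1/2}) p := by
        have hsub : Set.MapsTo (fun q : ℝ × W => (2 * q.1, q.2))
            (D ∩ {q : ℝ × W | q.1 ≤ 1/2}) h1.dom := by
          rintro q ⟨hq, hq2⟩
          exact hmem1 q hq hq2
        have hc : ContinuousWithinAt (h1.toFun ∘ fun q : ℝ × W => (2 * q.1, q.2))
            (D ∩ {q : ℝ × W | q.1 ≤ 1/2}) p :=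
          (h1.cont.comp αcont.continuousOn hsub) p ⟨hp, le_of_eq heq⟩
        exact hc.congr (fun q hq => if_pos hq.2) (if_pos (le_of_eq heq))
      have cw2 : ContinuousWithinAt
          (fun p : ℝ × W => if p.1 ≤ 1/2 then h1.toFun (2 * p.1, p.2)
            else h2.toFun (2 * p.1 - 1, p.2)) (D ∩ {q : ℝ × W | 1/2 ≤ q.1}) p := by
        have hsub : Set.MapsTo (fun q : ℝ × W => (2 * q.1 - 1, q.2))
            (D ∩ {q : ℝ × W | 1/2 ≤ q.1}) h2.dom := by
          rintro q ⟨hq, hq2⟩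
          exact hmem2 q hq hq2
        have hc : ContinuousWithinAt (h2.toFun ∘ fun q : ℝ × W => (2 * q.1 - 1, q.2))
            (D ∩ {q : ℝ × W | 1/2 ≤ q.1}) p :=
          (h2.cont.comp βcont.continuousOn hsub) p ⟨hp, ge_of_eq heq⟩
        refine hc.congr ?_ ?_
        · rintro ⟨t, y⟩ ⟨hqD, hq2⟩
          by_cases hle : t ≤ 1/2
          · have hteq : t = 1/2 := le_antisymm hle hq2
            subst hteq
            rw [if_pos hle]
            have hm1 : (2 * (1/2 : ℝ), y) ∈ h1.dom := hmem1 (1/2, y) hqD hle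
            rw [show 2 * (1/2 : ℝ) = 1 by norm_num] at hm1
            have hyg : y ∈ g.dom := by rw [← a1]; exact hm1
            show h1.toFun (2 * (1/2 : ℝ), y) = h2.toFun (2 * (1/2 : ℝ) - 1, y)
            rw [show 2 * (1/2 : ℝ) - 1 = 0 by norm_num, show 2 * (1/2 : ℝ) = 1 by norm_num]
            exact jval y hyg
          · rw [if_neg hle]
            rfl
        · have hm1 : (2 * p.1, p.2) ∈ h1.dom := hmem1 p hp (le_of_eq heq)
          have hyg : p.2 ∈ g.dom := by
            rw [← a1]
            rw [heq, show 2 * (1/2 : ℝ) = 1 by norm_num] at hm1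
            exact hm1
          show (if p.1 ≤ 1/2 then h1.toFun (2 * p.1, p.2) else h2.toFun (2 * p.1 - 1, p.2)) =
            h2.toFun (2 * p.1 - 1, p.2)
          rw [if_pos (le_of_eq heq), heq, show 2 * (1/2 : ℝ) - 1 = 0 by norm_num,
            show 2 * (1/2 : ℝ) = 1 by norm_num]
          exact jval p.2 hyg
      refine (cw1.union cw2).mono ?_
      intro q hq
      by_cases hle : q.1 ≤ 1/2
      · exact Or.inl ⟨hq, hle⟩
      · exact Or.inr ⟨hq, le_of_not_ge hle⟩
    · have hnb : {q : ℝ × W | 1/2 < q.1} ∈ nhds p :=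
        (isOpen_lt continuous_const continuous_fst).mem_nhds hgt
      rw [← continuousWithinAt_inter hnb]
      have hsub : Set.MapsTo (fun q : ℝ × W => (2 * q.1 - 1, q.2))
          (D ∩ {q : ℝ × W | 1/2 < q.1}) h2.dom := by
        rintro q ⟨hq, hq2⟩
        exact hmem2 q hq (le_of_lt hq2)
      have hc : ContinuousWithinAt (h2.toFun ∘ fun q : ℝ × W => (2 * q.1 - 1, q.2))
          (D ∩ {q : ℝ × W | 1/2 < q.1}) p :=
        (h2.cont.comp βcont.continuousOn hsub) p ⟨hp, hgt⟩
      exact hc.congr (fun q hq => if_neg (not_le.mpr hq.2)) (if_neg (not_le.mpr hgt))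
  · -- equivariance
    intro g' t x hp
    by_cases hle : t ≤ 1/2
    · simp only [if_pos hle]
      exact h1.equivariant g' (2 * t) x (hmem1 (t, x) hp hle)
    · simp only [if_neg hle]
      exact h2.equivariant g' (2 * t - 1) x (hmem2 (t, x) hp (le_of_not_ge hle))
  · -- zeros compact
    have hzeq : {p ∈ D | (if p.1 ≤ 1/2 then h1.toFun (2 * p.1, p.2)
        else h2.toFun (2 * p.1 - 1, p.2)) = 0} =
        ((fun q : ℝ × W => (q.1 / 2, q.2)) '' {q ∈ h1.dom | h1.toFun q = 0}) ∪
        ((fun q : ℝ × W => ((q.1 + 1) / 2, q.2)) '' {q ∈ h2.dom | h2.toFun q = 0}) := by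
      ext ⟨t, x⟩
      constructor
      · rintro ⟨hpD, hz⟩
        by_cases hle : t ≤ 1/2
        · rw [if_pos hle] at hz
          refine Or.inl ⟨(2 * t, x), ⟨hmem1 (t, x) hpD hle, hz⟩, ?_⟩
          show ((2 * t : ℝ) / 2, x) = (t, x)
          rw [show (2 * t : ℝ) / 2 = t by ring]
        · rw [if_neg hle] at hz
          refine Or.inr ⟨(2 * t - 1, x), ⟨hmem2 (t, x) hpD (le_of_not_ge hle), hz⟩, ?_⟩
          show ((2 * t - 1 + 1 : ℝ) / 2, x) = (t, x)
          rw [show (2 * t - 1 + 1 : ℝ) / 2 = t by ring]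
      · rintro (⟨⟨s, y⟩, ⟨hdom, hz⟩, heq⟩ | ⟨⟨s, y⟩, ⟨hdom, hz⟩, heq⟩)
        · obtain ⟨rfl, rfl⟩ : s / 2 = t ∧ y = x := by simpa [Prod.ext_iff] using heq
          obtain ⟨_, hs, _⟩ := hd1sub _ hdom
          simp only [Set.mem_Icc] at hs
          have hle : s / 2 ≤ 1/2 := by linarith
          constructor
          · refine Or.inl ⟨hle, ?_⟩
            rw [show 2 * (s / 2) = s by ring]
            exact hdom
          · rw [if_pos hle, show 2 * (s / 2) = s by ring]
            exact hz
        · obtain ⟨rfl, rfl⟩ : (s + 1) / 2 = t ∧ y = x := by simpa [Prod.ext_iff] using heq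
          obtain ⟨_, hs, _⟩ := hd2sub _ hdom
          simp only [Set.mem_Icc] at hs
          have hge : (1:ℝ)/2 ≤ (s + 1) / 2 := by linarith
          constructor
          · refine Or.inr ⟨hge, ?_⟩
            rw [show 2 * ((s + 1) / 2) - 1 = s by ring]
            exact hdom
          · by_cases hle : (s + 1) / 2 ≤ 1/2
            · have hs0 : s = 0 := le_antisymm (by linarith) hs.1
              subst hs0
              rw [if_pos hle, show 2 * ((0 + 1 : ℝ) / 2) = 1 by norm_num]
              have hyg : y ∈ g.dom := by rw [← b0]; exact hdom
              rw [jval y hyg]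
              exact hz
            · rw [if_neg hle, show 2 * ((s + 1) / 2) - 1 = s by ring]
              exact hz
    rw [hzeq]
    have c1 : Continuous fun q : ℝ × W => (q.1 / 2, q.2) :=
      (continuous_fst.div_const 2).prodMk continuous_snd
    have c2 : Continuous fun q : ℝ × W => ((q.1 + 1) / 2, q.2) :=
      ((continuous_fst.add continuous_const).div_const 2).prodMk continuous_snd
    exact (h1.zeros_compact.image c1).union (h2.zeros_compact.image c2)
  · -- IsGrad
    intro t
    by_cases hle : t ≤ 1/2
    · obtain ⟨φ, hi, hgr⟩ := g1 (2 * t)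
      refine ⟨φ, fun g' x hx => hi g' x (hmem1 (t, x) hx hle), fun x hx => ?_⟩
      simp only [if_pos hle]
      exact hgr x (hmem1 (t, x) hx hle)
    · obtain ⟨φ, hi, hgr⟩ := g2 (2 * t - 1)
      refine ⟨φ, fun g' x hx => hi g' x (hmem2 (t, x) hx (le_of_not_ge hle)), fun x hx => ?_⟩
      simp only [if_neg hle]
      exact hgr x (hmem2 (t, x) hx (le_of_not_ge hle))
  · -- slice at 0
    ext x
    simp only [Set.mem_setOf_eq, hD]
    constructor
    · rintro (⟨_, hm⟩ | ⟨hc, _⟩)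
      · rw [show 2 * (0:ℝ) = 0 by norm_num] at hm
        rw [← a0]
        exact hm
      · norm_num at hc
    · intro hx
      refine Or.inl ⟨by norm_num, ?_⟩
      rw [show 2 * (0:ℝ) = 0 by norm_num, ← Set.mem_setOf_eq (p := fun x => ((0:ℝ), x) ∈ h1.dom), a0]
      exact hx
  · -- slice at 1
    ext x
    simp only [Set.mem_setOf_eq, hD]
    constructor
    · rintro (⟨hc, _⟩ | ⟨_, hm⟩)
      · norm_num at hc
      · rw [show 2 * (1:ℝ) - 1 = 1 by norm_num] at hm
        rw [← b1]
        exact hm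
    · intro hx
      refine Or.inr ⟨by norm_num, ?_⟩
      rw [show 2 * (1:ℝ) - 1 = 1 by norm_num,
        ← Set.mem_setOf_eq (p := fun x => ((1:ℝ), x) ∈ h2.dom), b1]
      exact hx
  · -- value at 0
    intro x hx
    show (if (0:ℝ) ≤ 1/2 then h1.toFun (2 * (0:ℝ), x) else h2.toFun (2 * (0:ℝ) - 1, x)) = f.toFun x
    rw [if_pos (by norm_num : (0:ℝ) ≤ 1/2), show 2 * (0:ℝ) = 0 by norm_num]
    exact v0 x hx
  · -- value at 1
    intro x hx
    show (if (1:ℝ) ≤ 1/2 then h1.toFun (2 * (1:ℝ), x) else h2.toFun (2 * (1:ℝ) - 1, x)) = k.toFun x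
    rw [if_neg (by norm_num : ¬ (1:ℝ) ≤ 1/2), show 2 * (1:ℝ) - 1 = 1 by norm_num]
    exact w1 x hx

end EquivProof


/-- Gradient otopy is an equivalence relation on `F^∇_G(Ω)`. -/
theorem gradOtopic_equivalence
    {n : ℕ} {G : Type*} [Group G] [TopologicalSpace G] [CompactSpace G]
    [ChartedSpace (EuclideanSpace ℝ (Fin n)) G] [LieGroup (𝓡 n) (⊤ : ℕ∞) G]
    {V : Type*} [NormedAddCommGroup V] [InnerProductSpace ℝ V] [FiniteDimensional ℝ V]
    (ρ : G →* (V ≃ₗᵢ[ℝ] V)) (hρ : Continuous fun p : G × V => ρ p.1 p.2)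
    (Ω : Set V) (hΩo : IsOpen Ω) (hΩinv : ∀ (g : G) (x : V), x ∈ Ω → ρ g x ∈ Ω) :
    Equivalence (GradOtopic (ρ := ρ) (Ω := Ω)) := by
  exact ⟨fun f => gradOtopic_refl f, fun h => gradOtopic_symm h,
    fun h1 h2 => gradOtopic_trans h1 h2⟩

end
end

section
/- Let G be a compact Lie group, V a finite-dimensional real orthogonal representation of G, and Ω an open G-invariant subset of V with 0 ∈ Ω and V^G = {0}. If f, g ∈ F_G(Ω) are otopic equivariant local maps, then 0 ∈ D_f if and only if 0 ∈ D_g; in particular, membership of 0 in the domain is a (gradient) otopy invariant on F^∇_G(Ω). -/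
open scoped Manifold Classical

set_option linter.unusedSectionVars false

noncomputable section

/-- If `0 ∈ Ω` and `V^G = 0`, then for otopic equivariant local maps `f, g` one has
`0 ∈ D_f ↔ 0 ∈ D_g`; in particular membership of `0` in the domain is a (gradient)
otopy invariant on `F^∇_G(Ω)`. -/
theorem zero_membership_otopy_invariant
    {n : ℕ} {G : Type*} [Group G] [TopologicalSpace G] [CompactSpace G]
    [ChartedSpace (EuclideanSpace ℝ (Fin n)) G] [LieGroup (𝓡 n) (⊤ : ℕ∞) G]
    {V : Type*} [NormedAddCommGroup V] [InnerProductSpace ℝ V] [FiniteDimensional ℝ V]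
    (ρ : G →* (V ≃ₗᵢ[ℝ] V)) (hρ : Continuous fun p : G × V => ρ p.1 p.2)
    (Ω : Set V) (hΩo : IsOpen Ω) (hΩinv : ∀ (g : G) (x : V), x ∈ Ω → ρ g x ∈ Ω)
    (h0 : (0 : V) ∈ Ω) (hfix : ∀ v : V, (∀ g : G, ρ g v = v) → v = 0) :
    (∀ f g : EqLocalMap ρ Ω, Otopic f g → ((0 : V) ∈ f.dom ↔ (0 : V) ∈ g.dom)) ∧
    (∀ f g : GradLocalMap ρ Ω, GradOtopic f g → ((0 : V) ∈ f.dom ↔ (0 : V) ∈ g.dom)) := by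
  -- Key claim: for any otopy h, (0,0) ∈ h.dom ↔ (1,0) ∈ h.dom.
  have key : ∀ h : Otopy ρ Ω, (((0:ℝ), (0:V)) ∈ h.dom ↔ ((1:ℝ), (0:V)) ∈ h.dom) := by
    intro h
    obtain ⟨U, hUo, hUeq⟩ := h.dom_relOpen
    -- zeros along the t-axis: if (t,0) ∈ dom then h(t,0) = 0
    have hz : ∀ t : ℝ, (t, (0:V)) ∈ h.dom → h.toFun (t, 0) = 0 := by
      intro t ht
      apply hfix
      intro g
      have := h.equivariant g t 0 ht
      rw [map_zero] at this
      rw [← this]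
    -- work in the connected space [0,1]
    haveI : ConnectedSpace (Set.Icc (0:ℝ) 1) :=
      Subtype.connectedSpace ⟨Set.nonempty_Icc.mpr zero_le_one, isPreconnected_Icc⟩
    set S : Set (Set.Icc (0:ℝ) 1) := {t | ((t : ℝ), (0:V)) ∈ h.dom} with hS
    have hmem : ∀ t : Set.Icc (0:ℝ) 1, t ∈ S ↔ ((t : ℝ), (0:V)) ∈ U := by
      intro t
      constructor
      · intro ht
        rw [hS, Set.mem_setOf_eq, hUeq] at ht
        exact ht.1
      · intro ht
        rw [hS, Set.mem_setOf_eq, hUeq]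
        exact ⟨ht, t.2, h0⟩
    have hopen : IsOpen S := by
      have : S = (fun t : Set.Icc (0:ℝ) 1 => ((t : ℝ), (0:V))) ⁻¹' U := by
        ext t; exact hmem t
      rw [this]
      exact hUo.preimage (continuous_subtype_val.prodMk continuous_const)
    have hclosed : IsClosed S := by
      have hC : IsClosed {p ∈ h.dom | h.toFun p = 0} := h.zeros_compact.isClosed
      have : S = (fun t : Set.Icc (0:ℝ) 1 => ((t : ℝ), (0:V)))
          ⁻¹' {p ∈ h.dom | h.toFun p = 0} := by
        ext t
        simp only [Set.mem_preimage, Set.mem_setOf_eq, hS]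
        exact ⟨fun ht => ⟨ht, hz _ ht⟩, fun ht => ht.1⟩
      rw [this]
      exact hC.preimage (continuous_subtype_val.prodMk continuous_const)
    have hclopen : IsClopen S := ⟨hclosed, hopen⟩
    rcases isClopen_iff.mp hclopen with hempty | huniv
    · constructor
      · intro hd
        exact absurd (show (⟨0, by simp⟩ : Set.Icc (0:ℝ) 1) ∈ S from hd)
          (by rw [hempty]; exact Set.notMem_empty _)
      · intro hd
        exact absurd (show (⟨1, by simp⟩ : Set.Icc (0:ℝ) 1) ∈ S from hd)
          (by rw [hempty]; exact Set.notMem_empty _)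
    · constructor
      · intro _
        exact (show (⟨1, by simp⟩ : Set.Icc (0:ℝ) 1) ∈ S from huniv ▸ Set.mem_univ _)
      · intro _
        exact (show (⟨0, by simp⟩ : Set.Icc (0:ℝ) 1) ∈ S from huniv ▸ Set.mem_univ _)
  constructor
  · rintro f g ⟨h, hf, hg, -, -⟩
    have h1 : (0:V) ∈ f.dom ↔ ((0:ℝ), (0:V)) ∈ h.dom := by rw [← hf]; rfl
    have h2 : (0:V) ∈ g.dom ↔ ((1:ℝ), (0:V)) ∈ h.dom := by rw [← hg]; rfl
    rw [h1, h2]; exact key h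
  · rintro f g ⟨h, -, hf, hg, -, -⟩
    have h1 : (0:V) ∈ f.dom ↔ ((0:ℝ), (0:V)) ∈ h.dom := by rw [← hf]; rfl
    have h2 : (0:V) ∈ g.dom ↔ ((1:ℝ), (0:V)) ∈ h.dom := by rw [← hg]; rfl
    rw [h1, h2]; exact key h

end
end
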